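/- Minimizer of the regularized logistic 1-D problem via the 1-Lambert function: for c, λ > 0, the unique minimizer of g(α) = log(1 + e^{−αc}) + (λ/2)α² over α ∈ ℝ satisfies α + α e^{αc} = c/λ, i.e., letting W₁ denote the inverse of x ↦ xe^x + x on [0,∞), α* = (1/c)W₁(c²/λ). -/

import Mathlib

private lemma key_ineq (t : ℝ) : -1 < (1 + t) * Real.exp t := by
  have h1 : 0 < 1 + t + Real.exp (-t) := by
    nlinarith [Real.add_one_le_exp (-t)]
  have h2 : Real.exp (-t) * Real.exp t = 1 := by
    rw [← Real.exp_add]; simp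
  nlinarith [Real.exp_pos t, mul_pos h1 (Real.exp_pos t)]

/-- Minimizer of the regularized logistic 1-D problem via the 1-Lambert function:
for `c, λ > 0`, the minimizer `α*` of `g(α) = log(1 + e^{−αc}) + (λ/2)α²` is unique,
satisfies `α* + α* e^{α*c} = c/λ`, and equals `(1/c)W₁(c²/λ)`, where `W₁` is the
inverse of `x ↦ xe^x + x` on `[0, ∞)`. -/
theorem stmt18 (c lam : ℝ) (hc : 0 < c) (hlam : 0 < lam)
    (g : ℝ → ℝ) (hg : ∀ α, g α = Real.log (1 + Real.exp (-α * c)) + lam / 2 * α ^ 2)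
    (W1 : ℝ → ℝ) (hW1 : ∀ x, 0 ≤ x → W1 (x * Real.exp x + x) = x) :
    (∃! a : ℝ, ∀ α, g a ≤ g α) ∧
      ∀ a : ℝ, (∀ α, g a ≤ g α) →
        a + a * Real.exp (a * c) = c / lam ∧ a = (1 / c) * W1 (c ^ 2 / lam) := by
  -- the auxiliary function f
  set f : ℝ → ℝ := fun α => α + α * Real.exp (α * c) with hf
  -- f is strictly monotone
  have hfd : ∀ α : ℝ, HasDerivAt f (1 + Real.exp (α * c) + α * (c * Real.exp (α * c))) α := by
    intro α
    have h1 : HasDerivAt (fun α : ℝ => α * c) c α := by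
      simpa using (hasDerivAt_id α).mul_const c
    have h2 : HasDerivAt (fun α : ℝ => Real.exp (α * c)) (c * Real.exp (α * c)) α := by
      simpa [mul_comm] using h1.exp
    have h3 : HasDerivAt (fun α : ℝ => α * Real.exp (α * c))
        (1 * Real.exp (α * c) + α * (c * Real.exp (α * c))) α :=
      (hasDerivAt_id α).mul h2
    exact ((hasDerivAt_id α).add h3).congr_deriv (by ring)
  have hfmono : StrictMono f := by
    apply strictMono_of_deriv_pos
    intro α
    rw [(hfd α).deriv]
    have := key_ineq (α * c)
    nlinarith [Real.exp_pos (α * c)]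
  -- find x₀ with x₀ e^x₀ + x₀ = c²/lam
  have hM : 0 < c ^ 2 / lam := by positivity
  have hcont : ContinuousOn (fun x : ℝ => x * Real.exp x + x) (Set.Icc 0 (c ^ 2 / lam)) := by
    fun_prop
  have hsub : Set.Icc ((fun x : ℝ => x * Real.exp x + x) 0)
      ((fun x : ℝ => x * Real.exp x + x) (c ^ 2 / lam)) ⊆
      (fun x : ℝ => x * Real.exp x + x) '' Set.Icc 0 (c ^ 2 / lam) :=
    intermediate_value_Icc (le_of_lt hM) hcont
  obtain ⟨x₀, hx₀mem, hx₀⟩ : ∃ x₀ ∈ Set.Icc (0 : ℝ) (c ^ 2 / lam),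
      x₀ * Real.exp x₀ + x₀ = c ^ 2 / lam := by
    have : c ^ 2 / lam ∈ Set.Icc ((fun x : ℝ => x * Real.exp x + x) 0)
        ((fun x : ℝ => x * Real.exp x + x) (c ^ 2 / lam)) := by
      constructor
      · simp [le_of_lt hM]
      · simp only
        nlinarith [Real.exp_pos (c ^ 2 / lam)]
    obtain ⟨x₀, hmem, hx⟩ := hsub this
    exact ⟨x₀, hmem, hx⟩
  have hx₀0 : 0 ≤ x₀ := hx₀mem.1
  set a₀ : ℝ := x₀ / c with ha₀
  have ha₀c : a₀ * c = x₀ := by rw [ha₀]; field_simp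
  have hfa₀ : f a₀ = c / lam := by
    show a₀ + a₀ * Real.exp (a₀ * c) = c / lam
    rw [ha₀c, ha₀]
    have h := hx₀
    field_simp at h ⊢
    nlinarith [h]
  -- derivative of g
  have hgd : ∀ α : ℝ, HasDerivAt g (lam * α - c / (1 + Real.exp (α * c))) α := by
    intro α
    have h1 : HasDerivAt (fun α : ℝ => -α * c) (-c) α := by
      simpa using ((hasDerivAt_id α).neg.mul_const c)
    have he : HasDerivAt (fun α : ℝ => Real.exp (-α * c)) (-c * Real.exp (-α * c)) α := by
      simpa [mul_comm] using h1.exp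
    have hpos : (0:ℝ) < 1 + Real.exp (-α * c) := by positivity
    have hlog : HasDerivAt (fun α : ℝ => Real.log (1 + Real.exp (-α * c)))
        ((-c * Real.exp (-α * c)) / (1 + Real.exp (-α * c))) α := by
      simpa using ((hasDerivAt_const α (1:ℝ)).add he).log (ne_of_gt hpos)
    have hsq : HasDerivAt (fun α : ℝ => lam / 2 * α ^ 2) (lam * α) α := by
      have := (hasDerivAt_pow 2 α).const_mul (lam / 2)
      exact this.congr_deriv (by norm_num <;> ring)
    have hsum := hlog.add hsq
    have hEq : g = fun α : ℝ => Real.log (1 + Real.exp (-α * c)) + lam / 2 * α ^ 2 :=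
      funext hg
    rw [hEq]
    refine hsum.congr_deriv ?_
    have hE : Real.exp (-α * c) = (Real.exp (α * c))⁻¹ := by
      rw [← Real.exp_neg]; ring_nf
    have hE1 : (0:ℝ) < Real.exp (α * c) := Real.exp_pos _
    rw [hE]
    field_simp
    ring
  -- sign of derivative
  have hderiv_sign : ∀ α : ℝ, (lam * α - c / (1 + Real.exp (α * c))) =
      (lam * f α - c) / (1 + Real.exp (α * c)) := by
    intro α
    have hE1 : (0:ℝ) < 1 + Real.exp (α * c) := by positivity
    field_simp [hf]
    ring
  have hdpos : ∀ α : ℝ, a₀ < α → 0 < lam * α - c / (1 + Real.exp (α * c)) := by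
    intro α hα
    rw [hderiv_sign]
    apply div_pos _ (by positivity)
    have : f a₀ < f α := hfmono hα
    rw [hfa₀] at this
    have := (div_lt_iff₀ hlam).mp this
    linarith [this]
  have hdneg : ∀ α : ℝ, α < a₀ → lam * α - c / (1 + Real.exp (α * c)) < 0 := by
    intro α hα
    rw [hderiv_sign]
    apply div_neg_of_neg_of_pos _ (by positivity)
    have : f α < f a₀ := hfmono hα
    rw [hfa₀] at this
    have := (lt_div_iff₀ hlam).mp this
    linarith [this]
  have hgcont : Continuous g := by
    have : Differentiable ℝ g := fun α => (hgd α).differentiableAt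
    exact this.continuous
  -- strict monotone on Ici a₀, strict anti on Iic a₀
  have hmono : StrictMonoOn g (Set.Ici a₀) := by
    apply strictMonoOn_of_deriv_pos (convex_Ici a₀) hgcont.continuousOn
    intro α hα
    rw [interior_Ici] at hα
    rw [(hgd α).deriv]
    exact hdpos α hα
  have hanti : StrictAntiOn g (Set.Iic a₀) := by
    apply strictAntiOn_of_deriv_neg (convex_Iic a₀) hgcont.continuousOn
    intro α hα
    rw [interior_Iic] at hα
    rw [(hgd α).deriv]
    exact hdneg α hα
  have hmin : ∀ α, g a₀ ≤ g α := by
    intro α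
    rcases lt_trichotomy α a₀ with h | h | h
    · exact le_of_lt (hanti (le_of_lt h) (le_refl a₀) h)
    · rw [h]
    · exact le_of_lt (hmono (le_refl a₀) (le_of_lt h) h)
  have huniq : ∀ a : ℝ, (∀ α, g a ≤ g α) → a = a₀ := by
    intro a ha
    by_contra hne
    rcases lt_or_gt_of_ne hne with h | h
    · have : g a₀ < g a := hanti (le_of_lt h) (le_refl a₀) h
      exact absurd (ha a₀) (not_le.mpr this)
    · have : g a₀ < g a := hmono (le_refl a₀) (le_of_lt h) h
      exact absurd (ha a₀) (not_le.mpr this)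
  refine ⟨⟨a₀, hmin, huniq⟩, ?_⟩
  intro a ha
  have haeq : a = a₀ := huniq a ha
  subst haeq
  constructor
  · simpa [hf] using hfa₀
  · have hW : W1 (c ^ 2 / lam) = x₀ := by
      rw [← hx₀]; exact hW1 x₀ hx₀0
    rw [hW, ha₀]
    field_simp
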